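/- Let (X, σ) be a singly generated dynamical system and let E be its associated topological graph (E^0 = X, E^1 = dom(σ), d = σ, r : dom(σ) → X the inclusion). Then E is topologically free if and only if for every positive integer n the set {x ∈ dom(σ^n) : σ^n(x) = x} has empty interior in X, where dom(σ^n) = {x ∈ X : σ^k(x) ∈ dom(σ) for all 0 ≤ k ≤ n−1}. -/

import Mathlib

open Set Filter OnePoint

namespace TopGraphAux

/-- `E⁰_sce`: the open set of sources of a topological graph. -/
def graphSce {E0 E1 : Type*} [TopologicalSpace E0] (r : E1 → E0) : Set E0 :=
  (closure (Set.range r))ᶜ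

/-- `E⁰_fin`: vertices having a neighborhood whose `r`-preimage is compact. -/
def graphFin {E0 E1 : Type*} [TopologicalSpace E0] [TopologicalSpace E1] (r : E1 → E0) :
    Set E0 :=
  {v | ∃ V ∈ nhds v, IsCompact (r ⁻¹' V)}

/-- `E⁰_rg`: the open set of regular vertices of a topological graph. -/
def graphRg {E0 E1 : Type*} [TopologicalSpace E0] [TopologicalSpace E1] (r : E1 → E0) :
    Set E0 :=
  graphFin r \ closure (graphSce r)

/-- A factor map from the topological graph `F = (F0, F1, dF, rF)` to the topological graph
`E = (E0, E1, dE, rE)`: a pair of continuous maps between one-point compactifications sending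
`∞` to `∞`, intertwining range and domain maps, and with the unique edge-lifting property. -/
structure IsFactorMap {E0 E1 F0 F1 : Type*}
    [TopologicalSpace E0] [TopologicalSpace E1] [TopologicalSpace F0] [TopologicalSpace F1]
    (dE rE : E1 → E0) (dF rF : F1 → F0)
    (m0 : OnePoint F0 → OnePoint E0) (m1 : OnePoint F1 → OnePoint E1) : Prop where
  continuous_m0 : Continuous m0
  continuous_m1 : Continuous m1
  map_infty0 : m0 ∞ = ∞
  map_infty1 : m1 ∞ = ∞
  compat : ∀ (e : F1) (e' : E1), m1 ↑e = ↑e' →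
    (↑(rE e') : OnePoint E0) = m0 ↑(rF e) ∧ (↑(dE e') : OnePoint E0) = m0 ↑(dF e)
  lift : ∀ (e' : E1) (v : F0), (↑(dE e') : OnePoint E0) = m0 ↑v →
    ∃! e : F1, m1 ↑e = (↑e' : OnePoint E1) ∧ dF e = v

/-- Regularity of a factor map: every vertex mapping to a regular vertex receives an edge,
and all edges it receives are mapped to genuine edges. -/
def IsRegularFactorMap {E0 E1 F0 F1 : Type*}
    [TopologicalSpace E0] [TopologicalSpace E1] [TopologicalSpace F0] [TopologicalSpace F1]
    (rE : E1 → E0) (rF : F1 → F0)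
    (m0 : OnePoint F0 → OnePoint E0) (m1 : OnePoint F1 → OnePoint E1) : Prop :=
  ∀ (v : F0) (w : E0), m0 ↑v = ↑w → w ∈ graphRg rE →
    (∃ e : F1, rF e = v) ∧ ∀ e : F1, rF e = v → ∃ e' : E1, m1 ↑e = ↑e'

/-- `f` restricts to a homeomorphism from `U` onto `V`. -/
def IsHomeoOn {X Y : Type*} [TopologicalSpace X] [TopologicalSpace Y]
    (f : X → Y) (U : Set X) (V : Set Y) : Prop :=
  ∃ h : U ≃ₜ V, ∀ x : U, (h x : Y) = f (x : X)

/-- Extension of a map `A → OnePoint B` to the one-point compactification, sending `∞` to `∞`. -/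
def onePointLift {A B : Type*} (f : A → OnePoint B) : OnePoint A → OnePoint B :=
  fun x => Option.elim x ∞ f

/-- The relation identifying the copy in `S` of each point of `B ⊆ S` with the corresponding
point of `X`. -/
def glueRel {X : Type*} (S B : Set X) : (X ⊕ ↥S) → (X ⊕ ↥S) → Prop :=
  fun a b => ∃ x : ↥S, (x : X) ∈ B ∧
    ((a = Sum.inl ↑x ∧ b = Sum.inr x) ∨ (a = Sum.inr x ∧ b = Sum.inl ↑x))

/-- The space `X ⨿_B S` obtained from `X ⊔ S` by identifying the two copies of each point
of `B ⊆ S ⊆ X`. -/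
def Glue (X : Type*) (S B : Set X) : Type _ := Quot (glueRel S B)

instance {X : Type*} [TopologicalSpace X] (S B : Set X) : TopologicalSpace (Glue X S B) :=
  inferInstanceAs (TopologicalSpace (Quot _))

/-- The canonical inclusion `X → X ⨿_B S`. -/
def Glue.inl {X : Type*} {S B : Set X} (x : X) : Glue X S B := Quot.mk _ (Sum.inl x)

/-- The inclusion of the extra copy `S → X ⨿_B S`. -/
def Glue.inr {X : Type*} {S B : Set X} (x : ↥S) : Glue X S B := Quot.mk _ (Sum.inr x)

/-- The extension `d_Y` of the domain map `d` to the graph `E_Y`. -/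
def glueD {E0 E1 : Type*} [TopologicalSpace E0] (d : E1 → E0) (Y : Set E0) :
    Glue E1 (d ⁻¹' closure Y) (d ⁻¹' (closure Y \ Y)) → Glue E0 (closure Y) (closure Y \ Y) :=
  Quot.lift
    (Sum.elim (fun e => Glue.inl (d e)) (fun e => Glue.inr ⟨d e.1, e.2⟩))
    (by
      rintro a b ⟨x, hx, (⟨rfl, rfl⟩ | ⟨rfl, rfl⟩)⟩
      · exact Quot.sound ⟨⟨d x.1, x.2⟩, hx, Or.inl ⟨rfl, rfl⟩⟩
      · exact (Quot.sound ⟨⟨d x.1, x.2⟩, hx, Or.inl ⟨rfl, rfl⟩⟩).symm)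

/-- The extension `r_Y` of the range map `r` to the graph `E_Y`. -/
def glueR {E0 E1 : Type*} [TopologicalSpace E0] (d r : E1 → E0) (Y : Set E0) :
    Glue E1 (d ⁻¹' closure Y) (d ⁻¹' (closure Y \ Y)) → Glue E0 (closure Y) (closure Y \ Y) :=
  Quot.lift (Sum.elim (fun e => Glue.inl (r e)) (fun e => Glue.inl (r e.1)))
    (by rintro a b ⟨x, hx, (⟨rfl, rfl⟩ | ⟨rfl, rfl⟩)⟩ <;> rfl)

/-- The projection from the glued space back onto the original space. -/
def glueProj {X : Type*} (S B : Set X) : Glue X S B → X :=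
  Quot.lift (Sum.elim id Subtype.val)
    (by rintro a b ⟨x, hx, (⟨rfl, rfl⟩ | ⟨rfl, rfl⟩)⟩ <;> rfl)

/-- A point of the projective limit `E^i = Ẽ^i \ {∞}`: a compatible thread of points of the
one-point compactifications, not all equal to `∞`. -/
structure LimPt {Λ : Type*} [Preorder Λ] (X : Λ → Type*)
    (m : ∀ ⦃l l' : Λ⦄, l ≤ l' → OnePoint (X l') → OnePoint (X l)) where
  pt : ∀ l, OnePoint (X l)
  compat : ∀ ⦃l l' : Λ⦄ (h : l ≤ l'), m h (pt l') = pt l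
  exists_ne_infty : ∃ l, pt l ≠ ∞

instance {Λ : Type*} [Preorder Λ] (X : Λ → Type*) [∀ l, TopologicalSpace (X l)]
    (m : ∀ ⦃l l' : Λ⦄, l ≤ l' → OnePoint (X l') → OnePoint (X l)) :
    TopologicalSpace (LimPt X m) :=
  TopologicalSpace.induced LimPt.pt inferInstance

/-- Topological freeness: the set of base points of loops without entrances has empty
interior. -/
def IsTopologicallyFree {E0 E1 : Type*} [TopologicalSpace E0] (d r : E1 → E0) : Prop :=
  interior {v : E0 | ∃ (n : ℕ) (hn : 0 < n) (e : Fin n → E1),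
      (∀ k : Fin n, d (e k) = r (e ⟨(k.1 + 1) % n, Nat.mod_lt _ hn⟩)) ∧
      (∀ (k : Fin n) (e' : E1), r e' = r (e k) → e' = e k) ∧
      r (e ⟨0, hn⟩) = v} = ∅

open scoped Classical in
/-- Partial iteration of a partially defined map `σ` with domain `W`:
`sgdsIter σ n x = some y` iff `x ∈ dom (σ^n)` and `σ^n x = y`. -/
noncomputable def sgdsIter {X : Type*} {W : Set X} (σ : ↥W → X) : ℕ → X → Option X
  | 0, x => Option.some x
  | n + 1, x => if h : x ∈ W then sgdsIter σ n (σ ⟨x, h⟩) else none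


section Aux

open scoped Classical

variable {X : Type*} {W : Set X} (σ : ↥W → X)

theorem sgdsIter_zero (x : X) : sgdsIter σ 0 x = Option.some x := rfl

theorem sgdsIter_succ (n : ℕ) (x : X) :
    sgdsIter σ (n + 1) x = if h : x ∈ W then sgdsIter σ n (σ ⟨x, h⟩) else none := rfl

theorem sgdsIter_one (q : ↥W) : sgdsIter σ 1 (q : X) = Option.some (σ q) := by
  rw [show (1 : ℕ) = 0 + 1 from rfl, sgdsIter_succ, dif_pos q.2]; rfl

theorem sgdsIter_one_of_not_mem {y : X} (hy : y ∉ W) : sgdsIter σ 1 y = none := by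
  rw [show (1 : ℕ) = 0 + 1 from rfl, sgdsIter_succ, dif_neg hy]

theorem sgdsIter_add (m n : ℕ) (x : X) :
    sgdsIter σ (m + n) x = (sgdsIter σ m x).bind (sgdsIter σ n) := by
  induction m generalizing x with
  | zero => simp [sgdsIter_zero]
  | succ m ih =>
    have h : m + 1 + n = (m + n) + 1 := by omega
    rw [h, sgdsIter_succ, sgdsIter_succ]
    by_cases hx : x ∈ W
    · rw [dif_pos hx, dif_pos hx, ih]
    · rw [dif_neg hx, dif_neg hx]; rfl

theorem sgdsIter_isSome_of_le {m n : ℕ} (h : m ≤ n) {x : X}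
    (hx : (sgdsIter σ n x).isSome) : (sgdsIter σ m x).isSome := by
  obtain ⟨k, rfl⟩ := Nat.exists_eq_add_of_le h
  rw [sgdsIter_add] at hx
  cases hmx : sgdsIter σ m x <;> simp [hmx] at hx ⊢

theorem sgdsIter_step {n : ℕ} {x : X} (hx : (sgdsIter σ (n + 1) x).isSome) :
    ∃ p : ↥W, sgdsIter σ n x = Option.some (p : X) ∧ sgdsIter σ (n + 1) x = Option.some (σ p) := by
  rw [sgdsIter_add σ n 1] at hx ⊢
  cases hmx : sgdsIter σ n x with
  | none => rw [hmx] at hx; simp at hx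
  | some y =>
    rw [hmx, Option.bind_some] at hx
    simp only [Option.bind_some]
    by_cases hy : y ∈ W
    · exact ⟨⟨y, hy⟩, rfl, by rw [sgdsIter_one σ ⟨y, hy⟩]⟩
    · rw [sgdsIter_one_of_not_mem σ hy] at hx; simp at hx

theorem sgdsIter_isSome_all {n : ℕ} (hn : 0 < n) {x : X}
    (hx : sgdsIter σ n x = Option.some x) (k : ℕ) : (sgdsIter σ k x).isSome := by
  have hmul : ∀ m : ℕ, sgdsIter σ (m * n) x = Option.some x := by
    intro m
    induction m with
    | zero => rw [Nat.zero_mul]; rfl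
    | succ m ih => rw [Nat.succ_mul, sgdsIter_add, ih, Option.bind_some, hx]
  have hk : k ≤ k * n := Nat.le_mul_of_pos_right _ hn
  exact sgdsIter_isSome_of_le σ hk (by rw [hmul k]; rfl)

variable [TopologicalSpace X]

noncomputable def sgdsFun (n : ℕ) (x : X) : X := (sgdsIter σ n x).getD x

theorem sgdsDom_props (hW : IsOpen W) (hσ : Continuous σ) (n : ℕ) :
    IsOpen {x | (sgdsIter σ n x).isSome} ∧
      ContinuousOn (sgdsFun σ n) {x | (sgdsIter σ n x).isSome} := by
  set σ' : X → X := fun x => if h : x ∈ W then σ ⟨x, h⟩ else x with hσ'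
  have hσ'c : ContinuousOn σ' W := by
    rw [continuousOn_iff_continuous_restrict]
    have : W.domRestrict σ' = σ := funext fun y => dif_pos y.2
    rw [this]; exact hσ
  induction n with
  | zero =>
    constructor
    · have : {x : X | (sgdsIter σ 0 x).isSome} = univ := by
        ext x; simp [sgdsIter_zero]
      rw [this]; exact isOpen_univ
    · have : ∀ x ∈ {x : X | (sgdsIter σ 0 x).isSome}, sgdsFun σ 0 x = x := by
        intro x _; simp [sgdsFun, sgdsIter_zero]
      exact continuousOn_id.congr this
  | succ n ih =>
    have hDeq : {x | (sgdsIter σ (n + 1) x).isSome} =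
        W ∩ σ' ⁻¹' {x | (sgdsIter σ n x).isSome} := by
      ext x
      simp only [mem_setOf_eq, mem_inter_iff, mem_preimage]
      constructor
      · intro hx
        have hxW : x ∈ W := by
          by_contra hxW
          rw [sgdsIter_succ, dif_neg hxW] at hx; simp at hx
        refine ⟨hxW, ?_⟩
        rw [sgdsIter_succ, dif_pos hxW] at hx
        simp only [hσ', dif_pos hxW] at hx ⊢; exact hx
      · rintro ⟨hxW, hx⟩
        rw [sgdsIter_succ, dif_pos hxW]
        simp only [hσ', dif_pos hxW] at hx ⊢; exact hx
    have hopen : IsOpen {x | (sgdsIter σ (n + 1) x).isSome} := by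
      rw [hDeq]
      exact hσ'c.isOpen_inter_preimage hW ih.1
    refine ⟨hopen, ?_⟩
    have hcomp : ContinuousOn (sgdsFun σ n ∘ σ') {x | (sgdsIter σ (n + 1) x).isSome} := by
      apply ih.2.comp
      · exact hσ'c.mono (by rw [hDeq]; exact inter_subset_left)
      · intro x hx
        rw [hDeq] at hx
        exact hx.2
    apply hcomp.congr
    intro x hx
    have hxW : x ∈ W := by rw [hDeq] at hx; exact hx.1
    have hiter : sgdsIter σ (n + 1) x = sgdsIter σ n (σ' x) := by
      simp only [sgdsIter_succ, hσ', dif_pos hxW]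
    have hx' : (sgdsIter σ n (σ' x)).isSome := by rw [← hiter]; exact hx
    obtain ⟨y, hy⟩ := Option.isSome_iff_exists.mp hx'
    simp only [sgdsFun, Function.comp_apply, hiter, hy, Option.getD_some]

end Aux

/-- For a singly generated dynamical system `(X, σ)` with domain the open
set `W` and range the open set `O`, the associated topological graph
`E = (X, W, σ, inclusion)` is topologically free if and only if for every `n ≥ 1` the set
`{x ∈ dom(σⁿ) : σⁿ(x) = x}` has empty interior. -/
theorem statement18
    {X : Type*} [TopologicalSpace X] [T2Space X] [LocallyCompactSpace X]
    (W O : Set X) (hW : IsOpen W) (hO : IsOpen O)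
    (σ : ↥W → X) (hσ : IsLocalHomeomorph σ) (hrange : Set.range σ = O) :
    IsTopologicallyFree σ (Subtype.val : ↥W → X) ↔
      ∀ n : ℕ, 0 < n → interior {x : X | sgdsIter σ n x = Option.some x} = ∅ := by
  classical
  have hσc : Continuous σ := hσ.continuous
  set L : Set X := {v : X | ∃ (n : ℕ) (hn : 0 < n) (e : Fin n → ↥W),
      (∀ k : Fin n, σ (e k) = (e ⟨(k.1 + 1) % n, Nat.mod_lt _ hn⟩ : ↥W)) ∧
      (∀ (k : Fin n) (e' : ↥W), (e' : X) = (e k : X) → e' = e k) ∧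
      ((e ⟨0, hn⟩ : ↥W) : X) = v} with hL
  have hTF : IsTopologicallyFree σ (Subtype.val : ↥W → X) ↔ interior L = ∅ := Iff.rfl
  set F : ℕ → Set X := fun n => {x : X | sgdsIter σ n x = Option.some x} with hFdef
  -- Claim A : fixed points of σ^n are base points of loops
  have claimA : ∀ n : ℕ, 0 < n → ∀ x : X, sgdsIter σ n x = Option.some x → x ∈ L := by
    intro n hn x hx
    have hkey : ∀ k : ℕ, k < n →
        ∃ p : ↥W, sgdsIter σ k x = Option.some (p : X) ∧
          sgdsIter σ (k + 1) x = Option.some (σ p) := by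
      intro k hk
      apply sgdsIter_step σ
      exact sgdsIter_isSome_of_le σ (by omega : k + 1 ≤ n) (by rw [hx]; rfl)
    choose p hp1 hp2 using hkey
    have hp00 : (p 0 hn : X) = x := by
      have := hp1 0 hn
      rw [sgdsIter_zero] at this
      exact (Option.some.inj this).symm
    refine ⟨n, hn, fun k => p k.1 k.2, ?_, ?_, hp00⟩
    · intro k
      by_cases hk : k.1 + 1 < n
      · have h1 : (k.1 + 1) % n = k.1 + 1 := Nat.mod_eq_of_lt hk
        have h2 := hp1 (k.1 + 1) hk
        have h3 := hp2 k.1 k.2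
        rw [h2] at h3
        simp only [h1]
        exact (Option.some.inj h3).symm
      · have hkn : k.1 + 1 = n := by omega
        have h1 : (k.1 + 1) % n = 0 := by rw [hkn]; exact Nat.mod_self n
        have h3 := hp2 k.1 k.2
        rw [hkn, hx] at h3
        simp only [h1]
        rw [hp00]
        exact (Option.some.inj h3).symm
    · intro k e' he'
      exact Subtype.ext he'
  -- Claim B : base points of loops are fixed points of some σ^n
  have claimB : ∀ v ∈ L, ∃ m : ℕ, sgdsIter σ (m + 1) v = Option.some v := by
    rintro v ⟨n, hn, e, hloop, -, hbase⟩
    have key : ∀ k : ℕ, ∀ hk : k < n, sgdsIter σ k v = Option.some ((e ⟨k, hk⟩ : ↥W) : X) := by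
      intro k
      induction k with
      | zero => intro hk; exact congrArg Option.some hbase.symm
      | succ k ih =>
        intro hk
        have hkn : k < n := by omega
        rw [sgdsIter_add σ k 1, ih hkn, Option.bind_some, sgdsIter_one σ (e ⟨k, hkn⟩),
          hloop ⟨k, hkn⟩]
        simp only [Nat.mod_eq_of_lt hk]
    obtain ⟨m, rfl⟩ : ∃ m, n = m + 1 := ⟨n - 1, by omega⟩
    refine ⟨m, ?_⟩
    rw [sgdsIter_add σ m 1, key m (by omega), Option.bind_some,
      sgdsIter_one σ (e ⟨m, by omega⟩), hloop ⟨m, by omega⟩]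
    have h0 : (m + 1) % (m + 1) = 0 := Nat.mod_self _
    simp only [h0]
    exact congrArg Option.some hbase
  rw [hTF]
  constructor
  · intro htf n hn
    have hsub : F n ⊆ L := fun x hx => claimA n hn x hx
    have := interior_mono hsub
    rw [htf] at this
    exact subset_empty_iff.mp this
  · intro hfix
    by_contra hne
    obtain ⟨x0, hx0⟩ := nonempty_iff_ne_empty.mpr hne
    set V : Set X := interior L with hV
    have hVopen : IsOpen V := isOpen_interior
    have hVF : ∀ v ∈ V, ∃ m : ℕ, v ∈ F (m + 1) := by
      intro v hv
      obtain ⟨m, hm⟩ := claimB v (interior_subset hv)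
      exact ⟨m, hm⟩
    haveI : Nonempty V := ⟨⟨x0, hx0⟩⟩
    haveI : LocallyCompactSpace V := hVopen.locallyCompactSpace
    have hcov : ⋃ m : ℕ, closure ((Subtype.val : V → X) ⁻¹' F (m + 1)) = univ := by
      ext v
      simp only [mem_iUnion, mem_univ, iff_true]
      obtain ⟨m, hm⟩ := hVF v v.2
      exact ⟨m, subset_closure hm⟩
    obtain ⟨m, v, hv⟩ := nonempty_interior_of_iUnion_of_closed
      (fun m : ℕ => isClosed_closure) hcov
    set U : Set X := Subtype.val '' interior (closure ((Subtype.val : V → X) ⁻¹' F (m + 1)))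
      with hU
    have hUopen : IsOpen U := hVopen.isOpenMap_subtype_val _ isOpen_interior
    have hUne : U.Nonempty := ⟨v, v, hv, rfl⟩
    obtain ⟨hDopen, hDcont⟩ := sgdsDom_props σ hW hσc (m + 1)
    have hsub : U ⊆ F (m + 1) := by
      rintro x ⟨w, hw, rfl⟩
      have hwcl : (w : X) ∈ closure (F (m + 1)) := by
        have h1 : w ∈ closure ((Subtype.val : V → X) ⁻¹' F (m + 1)) := interior_subset hw
        have h2 := closure_subtype.mp h1
        exact closure_mono (image_preimage_subset _ _) h2
      have hwD : (w : X) ∈ {x : X | (sgdsIter σ (m + 1) x).isSome} := by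
        obtain ⟨l, hl⟩ := hVF w w.2
        exact sgdsIter_isSome_all σ (Nat.succ_pos l) hl (m + 1)
      have hne' : (nhdsWithin (w : X) (F (m + 1))).NeBot := mem_closure_iff_nhdsWithin_neBot.mp hwcl
      have hca : ContinuousAt (sgdsFun σ (m + 1)) (w : X) :=
        hDcont.continuousAt (hDopen.mem_nhds hwD)
      have ht1 : Tendsto (sgdsFun σ (m + 1)) (nhdsWithin (w : X) (F (m + 1)))
          (nhds (sgdsFun σ (m + 1) (w : X))) := hca.tendsto.mono_left nhdsWithin_le_nhds
      have ht2 : Tendsto (sgdsFun σ (m + 1)) (nhdsWithin (w : X) (F (m + 1))) (nhds (w : X)) := by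
        have hid : Tendsto (fun y : X => y) (nhdsWithin (w : X) (F (m + 1))) (nhds (w : X)) :=
          tendsto_id.mono_left nhdsWithin_le_nhds
        refine hid.congr' ?_
        filter_upwards [self_mem_nhdsWithin] with y hy
        have : sgdsIter σ (m + 1) y = Option.some y := hy
        simp [sgdsFun, this]
      have hfixw : sgdsFun σ (m + 1) (w : X) = (w : X) := tendsto_nhds_unique ht1 ht2
      show sgdsIter σ (m + 1) (w : X) = Option.some (w : X)
      obtain ⟨y, hy⟩ := Option.isSome_iff_exists.mp hwD
      rw [hy]
      rw [show y = sgdsFun σ (m + 1) (w : X) by simp [sgdsFun, hy], hfixw]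
    have : U ⊆ interior (F (m + 1)) := interior_maximal hsub hUopen
    rw [hfix (m + 1) (Nat.succ_pos m)] at this
    exact hUne.ne_empty (subset_empty_iff.mp this)

end TopGraphAux
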